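/- Let G = (V, E) be a finite directed acyclic graph and E_new an additional set of directed edges on V (disjoint from E) such that G_new = (V, E ∪ E_new) is also acyclic. Then there exists a strictly positive bid function b : V → ℝ such that for every edge (u, v) ∈ E ∪ E_new, the induced rank satisfies r(u) < r(v), where r(v) = b(v) + Σ_{u ∈ A(v)} b(u) and A(v) is the set of strict ancestors of v in G. -/

import Mathlib

open Classical Finset

/-- A directed graph (edge relation `E`) is acyclic iff no vertex reaches itself
by a directed path of positive length. -/
def Acyclic {V : Type*} (E : V → V → Prop) : Prop :=
  ∀ v, ¬ Relation.TransGen E v v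

/-- `u` is a strict ancestor of `v`: `u ≠ v` and there is a directed path from `u` to `v`. -/
def IsAncestor {V : Type*} (E : V → V → Prop) (u v : V) : Prop :=
  u ≠ v ∧ Relation.TransGen E u v

/-- The finite set of strict ancestors of `v`. -/
noncomputable def ancestors {V : Type*} [Fintype V] (E : V → V → Prop) (v : V) : Finset V :=
  Finset.univ.filter (fun u => IsAncestor E u v)

/-- The rank of `v`: its own bid plus the bids of all its strict ancestors. -/
noncomputable def rank {V : Type*} [Fintype V] (E : V → V → Prop) (b : V → ℝ) (v : V) : ℝ :=
  b v + ∑ u ∈ ancestors E v, b u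

theorem exists_bids_for_augmented_dag {V : Type*} [Fintype V] (E Enew : V → V → Prop)
    (hacyc : Acyclic E)
    (hdisj : ∀ u v, ¬ (E u v ∧ Enew u v))
    (hacyc' : Acyclic (fun u v => E u v ∨ Enew u v)) :
    ∃ b : V → ℝ, (∀ v, 0 < b v) ∧
      ∀ u v, (E u v ∨ Enew u v) → rank E b u < rank E b v := by
  classical
  set E' : V → V → Prop := fun u v => E u v ∨ Enew u v with hE'
  set n : ℕ := Fintype.card V with hn
  set pred : V → Finset V := fun v => Finset.univ.filter (fun u => Relation.TransGen E' u v)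
    with hpred
  set f : V → ℕ := fun v => (pred v).card with hf
  have hM1 : (1 : ℝ) ≤ (n + 1 : ℝ) := by have : (0:ℝ) ≤ (n:ℝ) := Nat.cast_nonneg n; linarith
  set b : V → ℝ := fun v => (n + 1 : ℝ) ^ (f v) with hb
  have hbpos : ∀ v, 0 < b v := fun v => by positivity
  -- key: TransGen E' u v → f u < f v
  have hkey : ∀ u v, Relation.TransGen E' u v → f u < f v := by
    intro u v huv
    apply Finset.card_lt_card
    constructor
    · intro w hw
      simp only [hpred, Finset.mem_filter, Finset.mem_univ, true_and] at hw ⊢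
      exact hw.trans huv
    · intro hsub
      have hu : u ∈ pred v := by
        simp only [hpred, Finset.mem_filter, Finset.mem_univ, true_and]
        exact huv
      have := hsub hu
      simp only [hpred, Finset.mem_filter, Finset.mem_univ, true_and] at this
      exact hacyc' u this
  refine ⟨b, hbpos, ?_⟩
  intro u v huv
  have huv' : Relation.TransGen E' u v := Relation.TransGen.single huv
  have hfuv : f u < f v := hkey u v huv'
  -- rank u ≤ n * (n+1)^(f u)
  have hrank_u : rank E b u ≤ (n : ℝ) * (n + 1 : ℝ) ^ (f u) := by
    have huA : u ∉ ancestors E u := by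
      intro h
      simp only [ancestors, Finset.mem_filter] at h
      exact h.2.1 rfl
    have : rank E b u = ∑ w ∈ insert u (ancestors E u), b w := by
      rw [Finset.sum_insert huA, rank]
    rw [this]
    have hbound : ∀ w ∈ insert u (ancestors E u), b w ≤ (n + 1 : ℝ) ^ (f u) := by
      intro w hw
      rcases Finset.mem_insert.mp hw with h | h
      · subst h; exact le_refl _
      · simp only [ancestors, Finset.mem_filter, Finset.mem_univ, true_and] at h
        have hwE' : Relation.TransGen E' w u :=
          Relation.TransGen.mono (p := E') (fun a c hac => Or.inl hac) w u h.2
        have : f w < f u := hkey w u hwE'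
        exact pow_le_pow_right₀ hM1 this.le
    calc ∑ w ∈ insert u (ancestors E u), b w
        ≤ ∑ _w ∈ insert u (ancestors E u), (n + 1 : ℝ) ^ (f u) :=
          Finset.sum_le_sum hbound
      _ = ((insert u (ancestors E u)).card : ℝ) * (n + 1 : ℝ) ^ (f u) := by
          rw [Finset.sum_const, nsmul_eq_mul]
      _ ≤ (n : ℝ) * (n + 1 : ℝ) ^ (f u) := by
          apply mul_le_mul_of_nonneg_right _ (by positivity)
          exact_mod_cast Finset.card_le_card (Finset.subset_univ _)
  -- rank v ≥ b v
  have hrank_v : b v ≤ rank E b v := by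
    have : (0 : ℝ) ≤ ∑ w ∈ ancestors E v, b w :=
      Finset.sum_nonneg fun w _ => (hbpos w).le
    rw [rank]; linarith
  calc rank E b u ≤ (n : ℝ) * (n + 1 : ℝ) ^ (f u) := hrank_u
    _ < (n + 1 : ℝ) * (n + 1 : ℝ) ^ (f u) := by
        apply mul_lt_mul_of_pos_right _ (by positivity)
        exact_mod_cast Nat.lt_succ_self n
    _ = (n + 1 : ℝ) ^ (f u + 1) := by ring
    _ ≤ (n + 1 : ℝ) ^ (f v) := pow_le_pow_right₀ hM1 hfuv
    _ = b v := rfl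
    _ ≤ rank E b v := hrank_v
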